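/- Among all matrices of rank at most k, the truncated SVD S_k minimizes the Frobenius distance to S (Eckart–Young theorem): for every matrix B with rank(B) ≤ k, ‖S − B‖_F ≥ ‖S − S_k‖_F. -/

import Mathlib

open Matrix Finset

section EckartYoungHelpers

lemma esum_apply {n : ℕ} {ι : Type*} (s : Finset ι) (f : ι → EuclideanSpace ℝ (Fin n))
    (i : Fin n) : (∑ a ∈ s, f a) i = ∑ a ∈ s, f a i := by
  induction s using Finset.cons_induction with
  | empty => rfl
  | cons a s ha ih => rw [Finset.sum_cons, Finset.sum_cons, ← ih]; rfl

lemma exists_on_family (n : ℕ) (W : Submodule ℝ (EuclideanSpace ℝ (Fin n))) :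
    ∃ w : Fin (Module.finrank ℝ W) → (Fin n → ℝ),
      (∀ a b, (∑ i, w a i * w b i) = if a = b then 1 else 0) ∧
      (∀ x ∈ W, ∃ c : Fin (Module.finrank ℝ W) → ℝ, ∀ i, x i = ∑ a, c a * w a i) := by
  classical
  let b := stdOrthonormalBasis ℝ W
  refine ⟨fun a i => (b a : EuclideanSpace ℝ (Fin n)) i, ?_, ?_⟩
  · intro a a'
    have h := b.orthonormal
    rw [orthonormal_iff_ite] at h
    have h2 := h a a'
    rw [Submodule.coe_inner] at h2
    simpa [PiLp.inner_apply, RCLike.inner_apply, conj_trivial, mul_comm] using h2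
  · intro x hx
    refine ⟨fun a => b.repr ⟨x, hx⟩ a, fun i => ?_⟩
    have h := b.sum_repr ⟨x, hx⟩
    have h2 := congrArg (fun z : W => (z : EuclideanSpace ℝ (Fin n)) i) h
    simp only [Submodule.coe_sum, Submodule.coe_smul, esum_apply, PiLp.smul_apply,
      smul_eq_mul] at h2
    exact h2.symm

lemma exists_on_family_of_rank {N M : ℕ} (B : Matrix (Fin N) (Fin M) ℝ) :
    ∃ (d : ℕ) (w : Fin d → (Fin N → ℝ)), d = B.rank ∧
      (∀ a b, (∑ i, w a i * w b i) = if a = b then 1 else 0) ∧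
      (∀ j, ∃ c : Fin d → ℝ, ∀ i, B i j = ∑ a, c a * w a i) := by
  classical
  let e : (Fin N → ℝ) ≃ₗ[ℝ] EuclideanSpace ℝ (Fin N) := (WithLp.linearEquiv 2 ℝ (Fin N → ℝ)).symm
  let W : Submodule ℝ (EuclideanSpace ℝ (Fin N)) := (LinearMap.range B.mulVecLin).map (e : (Fin N → ℝ) →ₗ[ℝ] EuclideanSpace ℝ (Fin N))
  obtain ⟨w, hw1, hw2⟩ := exists_on_family N W
  refine ⟨Module.finrank ℝ W, w, ?_, hw1, ?_⟩
  · rw [Matrix.rank]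
    exact (LinearEquiv.finrank_map_eq e _)
  · intro j
    have hmem : e (B.mulVec (Pi.single j 1)) ∈ W :=
      Submodule.mem_map_of_mem ⟨Pi.single j 1, rfl⟩
    obtain ⟨c, hc⟩ := hw2 _ hmem
    refine ⟨c, fun i => ?_⟩
    have : (e (B.mulVec (Pi.single j 1))) i = B i j := by
      show (B.mulVec (Pi.single j 1)) i = B i j
      simp [Matrix.mulVec_single]
    rw [← this]
    exact hc i

noncomputable def frob2 {n m : ℕ} (A : Matrix (Fin n) (Fin m) ℝ) : ℝ := ∑ i, ∑ j, (A i j)^2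

lemma frob2_eq_trace {n m : ℕ} (A : Matrix (Fin n) (Fin m) ℝ) :
    frob2 A = Matrix.trace (Aᵀ * A) := by
  simp only [frob2, Matrix.trace, Matrix.diag, Matrix.mul_apply, Matrix.transpose_apply, sq]
  exact Finset.sum_comm

lemma frob2_nonneg {n m : ℕ} (A : Matrix (Fin n) (Fin m) ℝ) : 0 ≤ frob2 A :=
  Finset.sum_nonneg fun _ _ => Finset.sum_nonneg fun _ _ => sq_nonneg _

lemma trace_gram_nonneg {n m : ℕ} (A : Matrix (Fin n) (Fin m) ℝ) :
    0 ≤ Matrix.trace (Aᵀ * A) := by rw [← frob2_eq_trace]; exact frob2_nonneg A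

lemma diag_gram_nonneg {n m : ℕ} (A : Matrix (Fin n) (Fin m) ℝ) (l : Fin m) :
    0 ≤ (Aᵀ * A) l l := by
  simp only [Matrix.mul_apply, Matrix.transpose_apply]
  exact Finset.sum_nonneg fun i _ => mul_self_nonneg _

lemma frob2_add {n m : ℕ} (X Y : Matrix (Fin n) (Fin m) ℝ) :
    frob2 (X + Y) = frob2 X + frob2 Y + 2 * Matrix.trace (Xᵀ * Y) := by
  simp only [frob2_eq_trace, Matrix.transpose_add, Matrix.add_mul, Matrix.mul_add,
    Matrix.trace_add]
  have h : Matrix.trace (Yᵀ * X) = Matrix.trace (Xᵀ * Y) := by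
    rw [← Matrix.trace_transpose (Yᵀ * X), Matrix.transpose_mul, Matrix.transpose_transpose]
  rw [h]; ring

lemma trace_mul_diag {n : ℕ} (A : Matrix (Fin n) (Fin n) ℝ) (s : Fin n → ℝ) :
    Matrix.trace (A * Matrix.diagonal s) = ∑ l, A l l * s l := by
  simp [Matrix.trace, Matrix.diag, Matrix.mul_diagonal]

lemma tr_svd {N M r : ℕ} (U : Matrix (Fin N) (Fin r) ℝ) (V : Matrix (Fin M) (Fin r) ℝ)
    (s : Fin r → ℝ) (hU : Uᵀ * U = 1) (hV : Vᵀ * V = 1) :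
    Matrix.trace ((U * Matrix.diagonal s * Vᵀ)ᵀ * (U * Matrix.diagonal s * Vᵀ))
      = ∑ l, (s l)^2 := by
  have ht : (U * Matrix.diagonal s * Vᵀ)ᵀ = V * Matrix.diagonal s * Uᵀ := by
    rw [Matrix.transpose_mul, Matrix.transpose_mul, Matrix.transpose_transpose,
      Matrix.diagonal_transpose, ← Matrix.mul_assoc]
  rw [ht, Matrix.mul_assoc (V * Matrix.diagonal s) Uᵀ _,
    ← Matrix.mul_assoc Uᵀ (U * Matrix.diagonal s) Vᵀ, ← Matrix.mul_assoc Uᵀ U (Matrix.diagonal s),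
    hU, Matrix.one_mul, Matrix.trace_mul_comm,
    Matrix.mul_assoc (Matrix.diagonal s) Vᵀ (V * Matrix.diagonal s),
    ← Matrix.mul_assoc Vᵀ V (Matrix.diagonal s), hV, Matrix.one_mul,
    Matrix.diagonal_mul_diagonal, Matrix.trace_diagonal]
  simp [sq]

lemma svd_entry {N M r : ℕ} (U : Matrix (Fin N) (Fin r) ℝ) (V : Matrix (Fin M) (Fin r) ℝ)
    (s : Fin r → ℝ) (i : Fin N) (j : Fin M) :
    (U * Matrix.diagonal s * Vᵀ) i j = ∑ l, s l * (U i l * V j l) := by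
  rw [Matrix.mul_apply]
  refine Finset.sum_congr rfl fun l _ => ?_
  rw [Matrix.mul_diagonal, Matrix.transpose_apply]
  ring

lemma idem_compl {n : ℕ} (P : Matrix (Fin n) (Fin n) ℝ) (h : P * P = P) :
    (1 - P) * (1 - P) = 1 - P := by
  simp only [Matrix.sub_mul, Matrix.mul_sub, Matrix.one_mul, Matrix.mul_one, h]
  abel

lemma card_filter_fin_lt (r k : ℕ) (h : k ≤ r) :
    (Finset.univ.filter (fun l : Fin r => (l:ℕ) < k)).card = k := by
  have hrk : (Finset.range r).filter (fun x => x < k) = Finset.range k := by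
    ext x; simp; omega
  rw [Finset.card_filter, Fin.sum_univ_eq_sum_range (fun i => if i < k then (1:ℕ) else 0),
    ← Finset.card_filter, hrk, Finset.card_range]

lemma rearrange (r k : ℕ) (lam q : Fin r → ℝ) (hmono : Antitone lam)
    (hl0 : ∀ l, 0 ≤ lam l) (hq0 : ∀ l, 0 ≤ q l) (hq1 : ∀ l, q l ≤ 1)
    (hqs : ∑ l, q l ≤ (k : ℝ)) :
    ∑ l, lam l * q l ≤ ∑ l ∈ Finset.univ.filter (fun l : Fin r => (l:ℕ) < k), lam l := by
  classical
  by_cases hk : r ≤ k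
  · have hA : Finset.univ.filter (fun l : Fin r => (l:ℕ) < k) = Finset.univ := by
      ext l; simp; omega
    rw [hA]
    apply Finset.sum_le_sum
    intro l _
    nlinarith [hl0 l, hq0 l, hq1 l]
  · push_neg at hk
    set A := Finset.univ.filter (fun l : Fin r => (l:ℕ) < k) with hAdef
    have hcard : A.card = k := card_filter_fin_lt r k hk.le
    set c := lam ⟨k, hk⟩ with hc
    have hc0 : 0 ≤ c := hl0 _
    have hsplit := Finset.sum_filter_add_sum_filter_not Finset.univ
      (fun l : Fin r => (l:ℕ) < k) (fun l => lam l * q l)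
    have hsplitq := Finset.sum_filter_add_sum_filter_not Finset.univ
      (fun l : Fin r => (l:ℕ) < k) q
    have h1 : ∑ l ∈ Finset.univ.filter (fun l : Fin r => ¬ (l:ℕ) < k), lam l * q l
        ≤ c * ∑ l ∈ Finset.univ.filter (fun l : Fin r => ¬ (l:ℕ) < k), q l := by
      rw [Finset.mul_sum]
      apply Finset.sum_le_sum
      intro l hl
      simp only [Finset.mem_filter] at hl
      have hlam : lam l ≤ c := hmono (by simp [Fin.le_def]; omega)
      exact mul_le_mul_of_nonneg_right hlam (hq0 l)
    have h2 : ∑ l ∈ Finset.univ.filter (fun l : Fin r => ¬ (l:ℕ) < k), q l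
        ≤ (k : ℝ) - ∑ l ∈ A, q l := by linarith
    have h3 : ∑ l, lam l * q l ≤ ∑ l ∈ A, lam l * q l + c * ((k:ℝ) - ∑ l ∈ A, q l) := by
      have := mul_le_mul_of_nonneg_left h2 hc0
      linarith
    have h4 : ∑ l ∈ A, lam l * q l + c * ((k:ℝ) - ∑ l ∈ A, q l)
        = ∑ l ∈ A, (lam l * q l + c * (1 - q l)) := by
      rw [Finset.sum_add_distrib]
      have : ∑ x ∈ A, c * (1 - q x) = c * ((k:ℝ) - ∑ l ∈ A, q l) := by
        simp only [mul_sub, mul_one]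
        rw [Finset.sum_sub_distrib, Finset.sum_const, hcard, ← Finset.mul_sum,
          nsmul_eq_mul]
        ring
      rw [this]
    have h5 : ∑ l ∈ A, (lam l * q l + c * (1 - q l)) ≤ ∑ l ∈ A, lam l := by
      apply Finset.sum_le_sum
      intro l hl
      simp only [hAdef, Finset.mem_filter] at hl
      have hlam : c ≤ lam l := hmono (by simp [Fin.le_def]; omega)
      nlinarith [hq0 l, hq1 l]
    linarith

end EckartYoungHelpers

/-- Eckart–Young theorem: the rank-`k` SVD truncation `S_k` minimizes the Frobenius
distance to `S` among all matrices of rank at most `k`. -/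
theorem eckart_young_frobenius
    (N M k : ℕ)
    (S : Matrix (Fin N) (Fin M) ℝ)
    (U : Matrix (Fin N) (Fin (min N M)) ℝ)
    (V : Matrix (Fin M) (Fin (min N M)) ℝ)
    (σ : Fin (min N M) → ℝ)
    (hU : Uᵀ * U = 1) (hV : Vᵀ * V = 1)
    (hσnonneg : ∀ i, 0 ≤ σ i) (hσmono : Antitone σ)
    (hS : S = U * Matrix.diagonal σ * Vᵀ) :
    ∀ B : Matrix (Fin N) (Fin M) ℝ, B.rank ≤ k →
      Real.sqrt (∑ i, ∑ j,
          ((S - ∑ l ∈ Finset.univ.filter (fun l : Fin (min N M) => (l : ℕ) < k),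
              σ l • Matrix.vecMulVec (fun a => U a l) (fun b => V b l)) i j) ^ 2)
        ≤ Real.sqrt (∑ i, ∑ j, ((S - B) i j) ^ 2) := by
  classical
  intro B hB
  set D := Matrix.diagonal σ with hDdef
  set A : Finset (Fin (min N M)) := Finset.univ.filter (fun l : Fin (min N M) => (l : ℕ) < k)
    with hAdef
  set Sk : Matrix (Fin N) (Fin M) ℝ :=
    ∑ l ∈ A, σ l • Matrix.vecMulVec (fun a => U a l) (fun b => V b l) with hSkdef
  have main : frob2 (S - Sk) ≤ frob2 (S - B) := by
    set σA : Fin (min N M) → ℝ := fun l => if (l:ℕ) < k then σ l else 0 with hσA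
    set σT : Fin (min N M) → ℝ := fun l => if (l:ℕ) < k then 0 else σ l with hσT
    -- LHS value
    have hSk : Sk = U * Matrix.diagonal σA * Vᵀ := by
      ext i j
      rw [svd_entry]
      rw [hSkdef, Matrix.sum_apply, hAdef]
      rw [Finset.sum_filter]
      refine Finset.sum_congr rfl fun l _ => ?_
      by_cases h : (l:ℕ) < k <;>
        simp [h, hσA, Matrix.vecMulVec_apply, mul_comm, mul_assoc]
    have hdiff : S - Sk = U * Matrix.diagonal σT * Vᵀ := by
      ext i j
      rw [Matrix.sub_apply, hS, hSk, hDdef, svd_entry, svd_entry, svd_entry,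
        ← Finset.sum_sub_distrib]
      refine Finset.sum_congr rfl fun l _ => ?_
      by_cases h : (l:ℕ) < k <;> simp [hσA, hσT, h]
    have hLHS : frob2 (S - Sk) = ∑ l, (σT l)^2 := by
      rw [hdiff, frob2_eq_trace, tr_svd U V σT hU hV]
    -- projection machinery
    obtain ⟨d, wv, hdrank, hw1, hw2⟩ := exists_on_family_of_rank B
    have hdk : d ≤ k := hdrank ▸ hB
    choose c hc using hw2
    set Wm : Matrix (Fin d) (Fin N) ℝ := Matrix.of wv with hWmdef
    have hWW : Wm * Wmᵀ = 1 := by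
      ext a b
      simpa [hWmdef, Matrix.mul_apply, Matrix.one_apply] using hw1 a b
    set P : Matrix (Fin N) (Fin N) ℝ := Wmᵀ * Wm with hPdef
    have hPt : Pᵀ = P := by rw [hPdef, Matrix.transpose_mul, Matrix.transpose_transpose]
    have hPP : P * P = P := by
      rw [hPdef, Matrix.mul_assoc, ← Matrix.mul_assoc Wm Wmᵀ Wm, hWW, Matrix.one_mul]
    have hPB : P * B = B := by
      have hBfac : B = Wmᵀ * (Matrix.of fun a j => c j a) := by
        ext i j
        rw [hc j i, Matrix.mul_apply]
        refine Finset.sum_congr rfl fun a _ => ?_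
        rw [hWmdef]
        simp only [Matrix.transpose_apply, Matrix.of_apply]
        ring
      rw [hBfac, hPdef, Matrix.mul_assoc, ← Matrix.mul_assoc Wm Wmᵀ _, hWW, Matrix.one_mul]
    have htrP : Matrix.trace P = (d:ℝ) := by
      rw [hPdef, Matrix.trace_mul_comm, hWW, Matrix.trace_one]
      simp
    -- SVD products
    have hSSt : S * Sᵀ = U * (D * D) * Uᵀ := by
      rw [hS]
      have ht : (U * D * Vᵀ)ᵀ = V * D * Uᵀ := by
        rw [Matrix.transpose_mul, Matrix.transpose_mul, Matrix.transpose_transpose,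
          hDdef, Matrix.diagonal_transpose, ← Matrix.mul_assoc]
      rw [ht, Matrix.mul_assoc (U * D) Vᵀ _, ← Matrix.mul_assoc Vᵀ (V * D) Uᵀ,
        ← Matrix.mul_assoc Vᵀ V D, hV, Matrix.one_mul, Matrix.mul_assoc U D (D * Uᵀ),
        ← Matrix.mul_assoc D D Uᵀ, ← Matrix.mul_assoc U (D * D) Uᵀ]
    have htrS : Matrix.trace (Sᵀ * S) = ∑ l, (σ l)^2 := by
      rw [hS, hDdef]
      exact tr_svd U V σ hU hV
    set G : Matrix (Fin (min N M)) (Fin (min N M)) ℝ := Uᵀ * P * U with hGdef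
    have hGgram : G = (Wm * U)ᵀ * (Wm * U) := by
      rw [hGdef, hPdef, Matrix.transpose_mul]
      simp only [Matrix.mul_assoc]
    have hq0 : ∀ l, 0 ≤ G l l := fun l => by rw [hGgram]; exact diag_gram_nonneg _ l
    have hq1 : ∀ l, G l l ≤ 1 := by
      intro l
      have h1P : (1 - P) * (1 - P) = 1 - P := idem_compl P hPP
      have hgram : ((1 - P) * U)ᵀ * ((1 - P) * U) = 1 - G := by
        rw [Matrix.transpose_mul, Matrix.transpose_sub, Matrix.transpose_one, hPt,
          Matrix.mul_assoc, ← Matrix.mul_assoc (1 - P) (1 - P) U, h1P,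
          Matrix.sub_mul, Matrix.one_mul, Matrix.mul_sub, hU, hGdef,
          ← Matrix.mul_assoc]
      have hnn := diag_gram_nonneg ((1 - P) * U) l
      rw [hgram] at hnn
      have h1 : (1 - G) l l = 1 - G l l := by
        simp [Matrix.sub_apply, Matrix.one_apply_eq]
      rw [h1] at hnn
      linarith
    have hqsum : ∑ l, G l l ≤ (k:ℝ) := by
      set Q : Matrix (Fin N) (Fin N) ℝ := U * Uᵀ with hQdef
      have hQt : Qᵀ = Q := by rw [hQdef, Matrix.transpose_mul, Matrix.transpose_transpose]
      have hQQ : Q * Q = Q := by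
        rw [hQdef, Matrix.mul_assoc, ← Matrix.mul_assoc Uᵀ U Uᵀ, hU, Matrix.one_mul]
      have h1Q : (1 - Q) * (1 - Q) = 1 - Q := idem_compl Q hQQ
      have htrG : ∑ l, G l l = Matrix.trace (P * Q) := by
        have h : Matrix.trace G = Matrix.trace (P * Q) := by
          rw [hGdef, Matrix.mul_assoc, Matrix.trace_mul_comm, Matrix.mul_assoc, hQdef]
        simpa [Matrix.trace, Matrix.diag] using h
      have hM : ((1 - Q) * P)ᵀ * ((1 - Q) * P) = P * ((1 - Q) * P) := by
        rw [Matrix.transpose_mul, Matrix.transpose_sub, Matrix.transpose_one, hQt, hPt,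
          Matrix.mul_assoc, ← Matrix.mul_assoc (1 - Q) (1 - Q) P, h1Q]
      have hnn := trace_gram_nonneg ((1 - Q) * P)
      rw [hM] at hnn
      have heq : Matrix.trace (P * ((1 - Q) * P)) = Matrix.trace P - Matrix.trace (P * Q) := by
        rw [Matrix.trace_mul_comm, Matrix.mul_assoc, hPP, Matrix.sub_mul, Matrix.one_mul,
          Matrix.trace_sub, Matrix.trace_mul_comm Q P]
      rw [heq, htrP] at hnn
      rw [htrG]
      have hdkr : (d:ℝ) ≤ (k:ℝ) := by exact_mod_cast hdk
      linarith
    have htrPS : Matrix.trace (Sᵀ * (P * S)) = ∑ l, G l l * (σ l)^2 := by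
      have h1 : Matrix.trace (Sᵀ * (P * S)) = Matrix.trace (P * (S * Sᵀ)) := by
        rw [Matrix.trace_mul_comm, Matrix.mul_assoc]
      rw [h1, hSSt, ← Matrix.mul_assoc P (U * (D * D)) Uᵀ, Matrix.trace_mul_comm,
        ← Matrix.mul_assoc P U (D * D), ← Matrix.mul_assoc Uᵀ (P * U) (D * D),
        ← Matrix.mul_assoc Uᵀ P U, ← hGdef, hDdef, Matrix.diagonal_mul_diagonal,
        trace_mul_diag]
      refine Finset.sum_congr rfl fun l _ => by ring
    have hXX : (S - P * S)ᵀ * (S - P * S) = Sᵀ * S - Sᵀ * (P * S) := by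
      rw [Matrix.transpose_sub, Matrix.transpose_mul, hPt, Matrix.sub_mul, Matrix.mul_sub,
        Matrix.mul_sub, Matrix.mul_assoc Sᵀ P S, Matrix.mul_assoc Sᵀ P (P * S),
        ← Matrix.mul_assoc P P S, hPP]
      abel
    have hcross : Matrix.trace ((S - P * S)ᵀ * (P * S - B)) = 0 := by
      have h : (S - P * S)ᵀ * (P * S - B) = 0 := by
        rw [Matrix.transpose_sub, Matrix.transpose_mul, hPt, Matrix.sub_mul, Matrix.mul_sub,
          Matrix.mul_sub, Matrix.mul_assoc Sᵀ P (P * S), ← Matrix.mul_assoc P P S, hPP,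
          Matrix.mul_assoc Sᵀ P B, hPB]
        abel
      rw [h, Matrix.trace_zero]
    have hsplit : frob2 (S - B) = frob2 (S - P * S) + frob2 (P * S - B) := by
      have h : S - B = (S - P * S) + (P * S - B) := by abel
      rw [h, frob2_add, hcross]
      ring
    have hineq1 : frob2 (S - P * S) ≤ frob2 (S - B) := by
      have := frob2_nonneg (P * S - B)
      linarith
    have hfX : frob2 (S - P * S) = (∑ l, (σ l)^2) - ∑ l, G l l * (σ l)^2 := by
      rw [frob2_eq_trace, hXX, Matrix.trace_sub, htrS, htrPS]
    have hre : ∑ l, G l l * (σ l)^2 ≤ ∑ l ∈ A, (σ l)^2 := by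
      have h := rearrange (min N M) k (fun l => (σ l)^2) (fun l => G l l)
        (fun a b hab => pow_le_pow_left₀ (hσnonneg b) (hσmono hab) 2)
        (fun l => sq_nonneg _) hq0 hq1 hqsum
      calc ∑ l, G l l * (σ l)^2 = ∑ l, (σ l)^2 * G l l := by
            exact Finset.sum_congr rfl fun l _ => mul_comm _ _
        _ ≤ ∑ l ∈ A, (σ l)^2 := by rw [hAdef]; exact h
    have hsumT : ∑ l, (σT l)^2 = (∑ l, (σ l)^2) - ∑ l ∈ A, (σ l)^2 := by
      have hsp := Finset.sum_filter_add_sum_filter_not Finset.univ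
        (fun l : Fin (min N M) => (l:ℕ) < k) (fun l => (σ l)^2)
      have h0 : ∑ l, (σT l)^2
          = ∑ l ∈ Finset.univ.filter (fun l : Fin (min N M) => ¬ (l:ℕ) < k), (σ l)^2 := by
        rw [Finset.sum_filter]
        refine Finset.sum_congr rfl fun l _ => ?_
        by_cases h : (l:ℕ) < k <;> simp [hσT, h]
      rw [h0, hAdef]
      linarith
    rw [hLHS, hsumT]
    calc (∑ l, (σ l)^2) - ∑ l ∈ A, (σ l)^2
        ≤ (∑ l, (σ l)^2) - ∑ l, G l l * (σ l)^2 := by linarith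
      _ = frob2 (S - P * S) := hfX.symm
      _ ≤ frob2 (S - B) := hineq1
  show Real.sqrt (frob2 (S - Sk)) ≤ Real.sqrt (frob2 (S - B))
  exact Real.sqrt_le_sqrt main
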